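/- Let m > 0 and let f : ℂ × ℂ → ℂ be an entire function of two variables. For h ∈ (0,1), define the deformed wave operator □_h f = e^{−r} D_r((1 + e^{·}) D_r f) − (e^{−r}+1) D_t² f, where D_r g(r,t) = (g(r+πih, t) − g(r−πih, t))/(2i sin(πh)) and D_t g(r,t) = (g(r, t+πih) − g(r, t−πih))/(2i sin(πh)). Then for every (r,t) ∈ ℝ², lim_{h→0⁺} (□_h f)(r,t) = (□ f)(r,t), where □ f = e^{−r} ∂_r((1+e^r) ∂_r f) − (e^{−r}+1) ∂_t² f is the classical wave operator; i.e. the classical wave operator is recovered in the limit h → 0. -/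

import Mathlib

open Filter


open Real Complex

/-- The finite-difference derivative in the first variable,
`D_r f (z,w) = (f(z+πih,w) − f(z−πih,w))/(2i sin(πh))`. -/
noncomputable def defDr (h : ℝ) (f : ℂ × ℂ → ℂ) (z w : ℂ) : ℂ :=
  (f (z + (π : ℂ) * (h : ℂ) * Complex.I, w) - f (z - (π : ℂ) * (h : ℂ) * Complex.I, w)) /
    (2 * Complex.I * ((Real.sin (π * h) : ℝ) : ℂ))

/-- The deformed wave operator
`□_h f = e^{−r} D_r((1+e^·) D_r f) − (e^{−r}+1) D_t² f` evaluated at real `(r,t)`. -/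
noncomputable def defBox (h : ℝ) (f : ℂ × ℂ → ℂ) (r t : ℝ) : ℂ :=
  (Real.exp (-r) : ℂ) *
      (((1 + Complex.exp ((r : ℂ) + (π : ℂ) * (h : ℂ) * Complex.I)) *
            defDr h f ((r : ℂ) + (π : ℂ) * (h : ℂ) * Complex.I) (t : ℂ)
          - (1 + Complex.exp ((r : ℂ) - (π : ℂ) * (h : ℂ) * Complex.I)) *
              defDr h f ((r : ℂ) - (π : ℂ) * (h : ℂ) * Complex.I) (t : ℂ)) /
        (2 * Complex.I * ((Real.sin (π * h) : ℝ) : ℂ)))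
    - ((Real.exp (-r) + 1 : ℝ) : ℂ) *
        ((f ((r : ℂ), (t : ℂ) + 2 * (π : ℂ) * (h : ℂ) * Complex.I)
            - 2 * f ((r : ℂ), (t : ℂ))
            + f ((r : ℂ), (t : ℂ) - 2 * (π : ℂ) * (h : ℂ) * Complex.I)) /
          (-(4 * ((Real.sin (π * h) : ℝ) : ℂ) ^ 2)))

/-- The classical wave operator `□ f = e^{−r} ∂_r((1+e^r)∂_r f) − (e^{−r}+1) ∂_t² f`
evaluated at real `(r,t)` (partial derivatives in the complex sense). -/
noncomputable def classBox (f : ℂ × ℂ → ℂ) (r t : ℝ) : ℂ :=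
  (Real.exp (-r) : ℂ) *
      deriv (fun z : ℂ => (1 + Complex.exp z) * deriv (fun y : ℂ => f (y, (t : ℂ))) z) (r : ℂ)
    - ((Real.exp (-r) + 1 : ℝ) : ℂ) *
        deriv (deriv (fun w : ℂ => f ((r : ℂ), w))) (t : ℂ)

lemma dslope_hasDerivAt {φ : ℂ → ℂ} (hφ : Differentiable ℂ φ) (a : ℂ) :
    HasDerivAt (dslope φ a) (deriv (deriv φ) a / 2) a := by
  obtain ⟨p, hp⟩ := hφ.analyticAt a
  have hd := hp.has_fpower_series_dslope_fslope.hasDerivAt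
  refine hd.congr_deriv (Eq.symm ?_)
  obtain ⟨R, hR⟩ := hp
  have key := hR.factorial_smul (1 : ℂ) 2
  rw [← iteratedDeriv_eq_iteratedFDeriv, iteratedDeriv_succ, iteratedDeriv_one] at key
  have h5 : (p.fslope 1 fun _ => 1) = p.fslope.coeff 1 := rfl
  rw [h5, FormalMultilinearSeries.coeff_fslope]
  have h6 : (p 2 fun _ => 1) = p.coeff 2 := rfl
  rw [h6] at key
  rw [← key]
  simp [Nat.factorial]

lemma shift_tendsto (a : ℂ) (c : ℂ) (hc : c ≠ 0) :
    Tendsto (fun ε : ℂ => a + c * ε) (nhdsWithin 0 {0}ᶜ) (nhdsWithin a {a}ᶜ) := by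
  apply tendsto_nhdsWithin_of_tendsto_nhds_of_eventually_within
  · have : Tendsto (fun ε : ℂ => a + c * ε) (nhds 0) (nhds (a + c * 0)) :=
      (Continuous.tendsto (by continuity) 0)
    simpa using this.mono_left nhdsWithin_le_nhds
  · filter_upwards [self_mem_nhdsWithin] with ε hε
    simp only [Set.mem_compl_iff, Set.mem_singleton_iff] at hε ⊢
    intro h
    have h' : c * ε = 0 := by linear_combination h
    exact hε ((mul_eq_zero.mp h').resolve_left hc)

lemma symmQuot {P : ℂ → ℂ} {a d : ℂ} (hP : HasDerivAt P d a) :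
    Tendsto (fun ε : ℂ => (P (a + ε) - P (a - ε)) / (2 * ε)) (nhdsWithin 0 {0}ᶜ)
      (nhds d) := by
  have hs := hasDerivAt_iff_tendsto_slope.mp hP
  have h1 : Tendsto (fun ε : ℂ => (P (a + ε) - P a) / ε) (nhdsWithin 0 {0}ᶜ) (nhds d) := by
    have := hs.comp (shift_tendsto a 1 one_ne_zero)
    refine this.congr (fun ε => ?_)
    simp [Function.comp, slope, div_eq_inv_mul]
  have h2 : Tendsto (fun ε : ℂ => (P a - P (a - ε)) / ε) (nhdsWithin 0 {0}ᶜ) (nhds d) := by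
    have := hs.comp (shift_tendsto a (-1) (by norm_num))
    refine this.congr (fun ε => ?_)
    simp only [Function.comp, slope]
    have e1 : a + -1 * ε - a = -ε := by ring
    have e2 : a + -1 * ε = a - ε := by ring
    rw [e1, e2, smul_eq_mul, inv_mul_eq_div]
    rcases eq_or_ne ε 0 with h | h
    · simp [h]
    · rw [div_eq_div_iff (neg_ne_zero.mpr h) h]; simp only [vsub_eq_sub]; ring
  have h3 := (h1.add h2).div_const 2
  have h4 : (d + d) / 2 = d := by ring
  rw [h4] at h3
  refine h3.congr (fun ε => ?_)
  rcases eq_or_ne ε 0 with h | h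
  · simp [h]
  · rw [← add_div, div_div]
    congr 1
    · ring
    · ring

lemma L1 {x s : ℂ} (hx : x ≠ 0) (hs : s ≠ 0) (p q A1 A2 A3 : ℂ) :
    (x / s) ^ 2 * ((p * ((A1 - A2) / (2 * x)) - q * ((A3 - A2) / (2 * -x))) / (2 * x))
      = (p * ((A1 - A2) / (2 * s)) - q * ((A2 - A3) / (2 * s))) / (2 * s) := by
  have h2x : (2 : ℂ) * x ≠ 0 := mul_ne_zero two_ne_zero hx
  have h2s : (2 : ℂ) * s ≠ 0 := mul_ne_zero two_ne_zero hs
  rw [div_pow, ← mul_div_assoc p, ← mul_div_assoc q,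
    show (2 : ℂ) * -x = -(2 * x) by ring, div_neg, sub_neg_eq_add, ← add_div,
    div_div, div_mul_div_comm,
    ← mul_div_assoc p, ← mul_div_assoc q, div_sub_div _ _ h2s h2s, div_div]
  rw [div_eq_div_iff (by exact mul_ne_zero (pow_ne_zero 2 hs) (mul_ne_zero h2x h2x))
    (by exact mul_ne_zero (mul_ne_zero h2s h2s) h2s)]
  ring
lemma L2 {x s : ℂ} (hx : x ≠ 0) (hs : s ≠ 0) (B1 B2 B3 : ℂ) :
    2 * ((x / s) ^ 2 * (((B1 - B2) / (2 * x) - (B3 - B2) / (-(2 * x))) / (2 * (2 * x))))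
      = (B1 - 2 * B2 + B3) / (4 * s ^ 2) := by
  have h2x : (2 : ℂ) * x ≠ 0 := mul_ne_zero two_ne_zero hx
  rw [div_pow, div_neg, sub_neg_eq_add, ← add_div, div_div, div_mul_div_comm,
    ← mul_div_assoc]
  rw [div_eq_div_iff (by exact mul_ne_zero (pow_ne_zero 2 hs) (mul_ne_zero h2x (mul_ne_zero two_ne_zero h2x)))
    (by exact mul_ne_zero (by norm_num) (pow_ne_zero 2 hs))]
  ring

/-- auxiliary function for the first term -/
noncomputable def auxP (f : ℂ × ℂ → ℂ) (r t : ℝ) : ℂ → ℂ :=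
  fun ε => (1 + Complex.exp ((r : ℂ) + ε)) *
    dslope (fun z : ℂ => f (z, (t : ℂ))) (r : ℂ) ((r : ℂ) + 2 * ε)

noncomputable def auxL (f : ℂ × ℂ → ℂ) (r t : ℝ) : ℂ → ℂ :=
  dslope (fun w : ℂ => f ((r : ℂ), w)) (t : ℂ)

lemma path_tendsto (c : ℝ) (hc : c ≠ 0) :
    Tendsto (fun h : ℝ => (c : ℂ) * ((π : ℂ) * (h : ℂ) * Complex.I))
      (nhdsWithin 0 (Set.Ioi 0)) (nhdsWithin 0 {0}ᶜ) := by
  apply tendsto_nhdsWithin_of_tendsto_nhds_of_eventually_within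
  · have hcont : Continuous (fun h : ℝ => (c : ℂ) * ((π : ℂ) * (h : ℂ) * Complex.I)) := by
      continuity
    have h0 : Tendsto (fun h : ℝ => (c : ℂ) * ((π : ℂ) * (h : ℂ) * Complex.I))
        (nhds 0) (nhds 0) := by
      have := hcont.tendsto 0
      simpa using this
    exact h0.mono_left nhdsWithin_le_nhds
  · filter_upwards [self_mem_nhdsWithin] with h hh
    simp only [Set.mem_Ioi] at hh
    simp only [Set.mem_compl_iff, Set.mem_singleton_iff]
    refine mul_ne_zero (Complex.ofReal_ne_zero.mpr hc) (mul_ne_zero (mul_ne_zero ?_ ?_) Complex.I_ne_zero)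
    · exact_mod_cast Real.pi_ne_zero
    · exact Complex.ofReal_ne_zero.mpr hh.ne'

lemma q_tendsto :
    Tendsto (fun h : ℝ => ((π * h / Real.sin (π * h) : ℝ) : ℂ))
      (nhdsWithin 0 (Set.Ioi 0)) (nhds 1) := by
  have hsin : Tendsto (fun x : ℝ => Real.sin x / x) (nhdsWithin 0 {0}ᶜ) (nhds 1) := by
    have := hasDerivAt_iff_tendsto_slope.mp (Real.hasDerivAt_sin 0)
    rw [Real.cos_zero] at this
    refine this.congr (fun x => ?_)
    simp [slope_def_field]
  have hpath : Tendsto (fun h : ℝ => π * h) (nhdsWithin 0 (Set.Ioi 0)) (nhdsWithin 0 {0}ᶜ) := by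
    apply tendsto_nhdsWithin_of_tendsto_nhds_of_eventually_within
    · have : Tendsto (fun h : ℝ => π * h) (nhds 0) (nhds (π * 0)) :=
        (continuous_const.mul continuous_id).tendsto 0
      simpa using this.mono_left nhdsWithin_le_nhds
    · filter_upwards [self_mem_nhdsWithin] with h hh
      simp only [Set.mem_Ioi] at hh
      simp only [Set.mem_compl_iff, Set.mem_singleton_iff]
      positivity
  have h1 : Tendsto (fun h : ℝ => Real.sin (π * h) / (π * h))
      (nhdsWithin 0 (Set.Ioi 0)) (nhds 1) := hsin.comp hpath
  have h2 := h1.inv₀ one_ne_zero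
  rw [inv_one] at h2
  have h3 : Tendsto (fun h : ℝ => π * h / Real.sin (π * h))
      (nhdsWithin 0 (Set.Ioi 0)) (nhds 1) := by
    refine h2.congr (fun h => ?_)
    rw [inv_div]
  have h4 : Tendsto (fun h : ℝ => ((π * h / Real.sin (π * h) : ℝ) : ℂ))
      (nhdsWithin 0 (Set.Ioi 0)) (nhds ((1 : ℝ) : ℂ)) :=
    (Complex.continuous_ofReal.tendsto 1).comp h3
  rw [Complex.ofReal_one] at h4
  exact h4

/-- for an entire function `f` of two variables the deformed wave operator
recovers the classical one in the limit `h → 0⁺`. -/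
theorem defBox_tendsto_classBox (f : ℂ × ℂ → ℂ) (hf : Differentiable ℂ f) :
    ∀ r t : ℝ,
      Filter.Tendsto (fun h : ℝ => defBox h f r t) (nhdsWithin 0 (Set.Ioi 0))
        (nhds (classBox f r t)) := by
  intro r t
  have hF : Differentiable ℂ (fun z : ℂ => f (z, (t : ℂ))) :=
    hf.comp (differentiable_id.prodMk (differentiable_const _))
  have hG : Differentiable ℂ (fun w : ℂ => f ((r : ℂ), w)) :=
    hf.comp ((differentiable_const _).prodMk differentiable_id)
  have hM := dslope_hasDerivAt hF (r : ℂ)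
  have hL := dslope_hasDerivAt hG (t : ℂ)
  set F := fun z : ℂ => f (z, (t : ℂ)) with hFdef
  set G := fun w : ℂ => f ((r : ℂ), w) with hGdef
  -- derivative of auxP at 0
  have hP : HasDerivAt (auxP f r t)
      (Complex.exp (r : ℂ) * deriv F (r : ℂ) + (1 + Complex.exp (r : ℂ)) * deriv (deriv F) (r : ℂ))
      0 := by
    have hinner1 : HasDerivAt (fun ε : ℂ => (r : ℂ) + ε) 1 0 := (hasDerivAt_id 0).const_add _
    have h1 : HasDerivAt (fun ε : ℂ => 1 + Complex.exp ((r : ℂ) + ε))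
        (Complex.exp ((r : ℂ) + 0) * 1) 0 := (hinner1.cexp).const_add 1
    have hinner2 : HasDerivAt (fun ε : ℂ => (r : ℂ) + 2 * ε) 2 0 := by
      simpa using ((hasDerivAt_id (0 : ℂ)).const_mul 2).const_add (r : ℂ)
    have hM' : HasDerivAt (dslope F (r : ℂ)) (deriv (deriv F) (r : ℂ) / 2) ((r : ℂ) + 2 * 0) := by
      simpa using hM
    have h2 := HasDerivAt.comp 0 hM' hinner2
    have h3 := h1.mul h2
    have : auxP f r t = fun ε : ℂ => (1 + Complex.exp ((r : ℂ) + ε)) *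
        dslope F (r : ℂ) ((r : ℂ) + 2 * ε) := rfl
    rw [this]
    refine h3.congr_deriv (Eq.symm ?_)
    simp only [Function.comp_apply, mul_zero, add_zero, dslope_same]
    ring
  -- limits
  have tendP := (symmQuot hP).comp (path_tendsto 1 one_ne_zero)
  have tendL := (symmQuot hL).comp (path_tendsto 2 two_ne_zero)
  have qlim := q_tendsto
  have qsq : Tendsto (fun h : ℝ => ((π * h / Real.sin (π * h) : ℝ) : ℂ) ^ 2)
      (nhdsWithin 0 (Set.Ioi 0)) (nhds 1) := by
    simpa using qlim.pow 2
  -- combined limit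
  have mainlim : Tendsto (fun h : ℝ =>
      (Real.exp (-r) : ℂ) *
        (((π * h / Real.sin (π * h) : ℝ) : ℂ) ^ 2 *
          ((auxP f r t (0 + (1:ℂ) * ((π : ℂ) * (h : ℂ) * Complex.I))
            - auxP f r t (0 - (1:ℂ) * ((π : ℂ) * (h : ℂ) * Complex.I))) /
              (2 * ((1:ℂ) * ((π : ℂ) * (h : ℂ) * Complex.I)))))
      - ((Real.exp (-r) + 1 : ℝ) : ℂ) *
        (2 * (((π * h / Real.sin (π * h) : ℝ) : ℂ) ^ 2 *
          ((auxL f r t ((t : ℂ) + (2:ℂ) * ((π : ℂ) * (h : ℂ) * Complex.I))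
            - auxL f r t ((t : ℂ) - (2:ℂ) * ((π : ℂ) * (h : ℂ) * Complex.I))) /
              (2 * ((2:ℂ) * ((π : ℂ) * (h : ℂ) * Complex.I)))))))
      (nhdsWithin 0 (Set.Ioi 0))
      (nhds ((Real.exp (-r) : ℂ) * (1 *
          (Complex.exp (r : ℂ) * deriv F (r : ℂ)
            + (1 + Complex.exp (r : ℂ)) * deriv (deriv F) (r : ℂ)))
        - ((Real.exp (-r) + 1 : ℝ) : ℂ) * (2 * (1 * (deriv (deriv G) (t : ℂ) / 2))))) := by
    refine Tendsto.sub (tendsto_const_nhds.mul (qsq.mul ?_))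
      (tendsto_const_nhds.mul (Tendsto.const_mul 2 (qsq.mul ?_)))
    · exact tendP
    · exact tendL
  -- identify the limit value with classBox
  have hdF : DifferentiableAt ℂ (deriv F) (r : ℂ) := by
    have hFa : AnalyticOnNhd ℂ F Set.univ := fun z _ => hF.analyticAt z
    exact (hFa.deriv (r : ℂ) (Set.mem_univ _)).differentiableAt
  have hder : HasDerivAt (fun z : ℂ => (1 + Complex.exp z) * deriv F z)
      (Complex.exp (r : ℂ) * deriv F (r : ℂ)
        + (1 + Complex.exp (r : ℂ)) * deriv (deriv F) (r : ℂ)) (r : ℂ) :=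
    ((Complex.hasDerivAt_exp (r : ℂ)).const_add 1).mul hdF.hasDerivAt
  have hval : classBox f r t
      = (Real.exp (-r) : ℂ) * (1 *
          (Complex.exp (r : ℂ) * deriv F (r : ℂ)
            + (1 + Complex.exp (r : ℂ)) * deriv (deriv F) (r : ℂ)))
        - ((Real.exp (-r) + 1 : ℝ) : ℂ) * (2 * (1 * (deriv (deriv G) (t : ℂ) / 2))) := by
    rw [classBox, ← hFdef, ← hGdef, hder.deriv]
    ring
  rw [hval]
  -- eventual equality of defBox with the auxiliary expression
  refine Tendsto.congr' ?_ mainlim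
  have hmem : Set.Ioo (0 : ℝ) 1 ∈ nhdsWithin (0 : ℝ) (Set.Ioi 0) :=
    Ioo_mem_nhdsGT_of_mem ⟨le_refl 0, one_pos⟩
  filter_upwards [hmem] with h hh
  obtain ⟨h0, h1⟩ := hh
  have hsn : Real.sin (π * h) ≠ 0 := by
    have := Real.sin_pos_of_pos_of_lt_pi (x := π * h) (by positivity)
      (by nlinarith [Real.pi_pos])
    linarith
  have hsnC : ((Real.sin (π * h) : ℝ) : ℂ) ≠ 0 := Complex.ofReal_ne_zero.mpr hsn
  have hx : ((π : ℂ) * (h : ℂ) * Complex.I) ≠ 0 := by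
    refine mul_ne_zero (mul_ne_zero ?_ ?_) Complex.I_ne_zero
    · exact_mod_cast Real.pi_ne_zero
    · exact Complex.ofReal_ne_zero.mpr h0.ne'
  set x : ℂ := (π : ℂ) * (h : ℂ) * Complex.I with hxdef
  -- dslope unfolding helper
  have dsl : ∀ (φ : ℂ → ℂ) (a b : ℂ), b ≠ a → dslope φ a b = (φ b - φ a) / (b - a) := by
    intro φ a b hne
    rw [dslope_of_ne _ hne, slope_def_field]
  have d1 : dslope F (r : ℂ) ((r : ℂ) + 2 * x) = (F ((r : ℂ) + 2 * x) - F (r : ℂ)) / (2 * x) := by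
    rw [dsl _ _ _ (by intro hcon; apply hx; linear_combination hcon / 2)]
    congr 1
    ring
  have d2 : dslope F (r : ℂ) ((r : ℂ) + 2 * -x) = (F ((r : ℂ) + 2 * -x) - F (r : ℂ)) / (2 * -x) := by
    rw [dsl _ _ _ (by intro hcon; apply hx; linear_combination -hcon / 2)]
    congr 1
    ring
  have d3 : dslope G (t : ℂ) ((t : ℂ) + 2 * x) = (G ((t : ℂ) + 2 * x) - G (t : ℂ)) / (2 * x) := by
    rw [dsl _ _ _ (by intro hcon; apply hx; linear_combination hcon / 2)]
    congr 1
    ring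
  have d4 : dslope G (t : ℂ) ((t : ℂ) - 2 * x) = (G ((t : ℂ) - 2 * x) - G (t : ℂ)) / (-(2 * x)) := by
    rw [dsl _ _ _ (by intro hcon; apply hx; linear_combination -hcon / 2)]
    congr 1
    ring
  have hsg0 : Complex.I * ((Real.sin (π * h) : ℝ) : ℂ) ≠ 0 :=
    mul_ne_zero Complex.I_ne_zero hsnC
  set sg : ℂ := Complex.I * ((Real.sin (π * h) : ℝ) : ℂ) with hsgdef
  have hsg : sg ≠ 0 := hsg0
  have e1 : 2 * Complex.I * ((Real.sin (π * h) : ℝ) : ℂ) = 2 * sg := by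
    rw [hsgdef]; ring
  have e2 : -(4 * ((Real.sin (π * h) : ℝ) : ℂ) ^ 2) = 4 * sg ^ 2 := by
    rw [hsgdef]
    linear_combination (-4 * ((Real.sin (π * h) : ℝ) : ℂ) ^ 2) * Complex.I_mul_I
  have e3 : ((π * h / Real.sin (π * h) : ℝ) : ℂ) = x / sg := by
    rw [Complex.ofReal_div, Complex.ofReal_mul, hxdef, hsgdef,
      div_eq_div_iff hsnC hsg0]
    ring
  -- now unfold everything
  show _ = defBox h f r t
  rw [defBox, defDr, defDr]
  simp only [auxP, auxL, zero_add, zero_sub, one_mul, ← hFdef, ← hGdef, ← hxdef]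
  have a1 : (r : ℂ) + x + x = (r : ℂ) + 2 * x := by ring
  have a2 : (r : ℂ) + x - x = (r : ℂ) := by ring
  have a3 : (r : ℂ) - x + x = (r : ℂ) := by ring
  have a4 : (r : ℂ) - x - x = (r : ℂ) + 2 * -x := by ring
  have a5 : (t : ℂ) + 2 * (π : ℂ) * (h : ℂ) * Complex.I = (t : ℂ) + 2 * x := by
    rw [hxdef]; ring
  have a6 : (t : ℂ) - 2 * (π : ℂ) * (h : ℂ) * Complex.I = (t : ℂ) - 2 * x := by
    rw [hxdef]; ring
  have a7 : (r : ℂ) + 2 * -x = (r : ℂ) - 2 * x := by ring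
  have a8 : (r : ℂ) + -x = (r : ℂ) - x := by ring
  rw [a1, a2, a3, a4, a5, a6, a8, d1, d2, d3, d4]
  simp only [e1, e2, e3]
  have hF1 : F ((r : ℂ) + 2 * x) = f ((r : ℂ) + 2 * x, (t : ℂ)) := rfl
  have hF2 : F ((r : ℂ) + 2 * -x) = f ((r : ℂ) + 2 * -x, (t : ℂ)) := rfl
  have hF3 : F (r : ℂ) = f ((r : ℂ), (t : ℂ)) := rfl
  have hG1 : G ((t : ℂ) + 2 * x) = f ((r : ℂ), (t : ℂ) + 2 * x) := rfl
  have hG2 : G ((t : ℂ) - 2 * x) = f ((r : ℂ), (t : ℂ) - 2 * x) := rfl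
  have hG3 : G (t : ℂ) = f ((r : ℂ), (t : ℂ)) := rfl
  rw [hF1, hF2, hF3, hG1, hG2, hG3, a7]
  rw [L1 hx hsg (1 + Complex.exp ((r : ℂ) + x)) (1 + Complex.exp ((r : ℂ) - x)) _ _ _,
    L2 hx hsg _ _ _]
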